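/- The lower bound in the bouquet inequality is sharp: the bouquet of n copies of the friendship graph F_2 at their centers is F_{2n}, and γ_sp(F_{2n}) = 2n+1 = (Σ_{i=1}^n γ_sp(F_2)) − n + 1 (using γ_sp(F_2) = 3). -/

import Mathlib

/-- `S` is a super dominating set of `G`: it is dominating, and for every `u ∉ S`
there is `v ∈ S` whose neighbours outside `S` are exactly `{u}`. -/
def IsSuperDominatingSet {V : Type*} (G : SimpleGraph V) (S : Finset V) : Prop :=
  (∀ u ∉ S, ∃ v ∈ S, G.Adj v u) ∧
  ∀ u ∉ S, ∃ v ∈ S, ∀ w, (G.Adj v w ∧ w ∉ S) ↔ w = u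

/-- The super domination number of `G`. -/
noncomputable def superDominationNumber {V : Type*} [Fintype V] (G : SimpleGraph V) : ℕ :=
  sInf {n | ∃ S : Finset V, IsSuperDominatingSet G S ∧ S.card = n}

/-- The bouquet `B(G₁,…,Gₙ)` of the graphs `G i` with respect to the vertices
`x i ∈ V(G i)`: the one-point union identifying all the `x i` into the single
common vertex `none`. -/
def bouquet {n : ℕ} {V : Fin n → Type*} (G : ∀ i, SimpleGraph (V i))
    (x : ∀ i, V i) : SimpleGraph (Option (Σ i : Fin n, {v : V i // v ≠ x i})) :=
  SimpleGraph.fromRel (fun u w =>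
    match u, w with
    | none, some b => (G b.1).Adj (x b.1) b.2.1
    | some b, some b' => ∃ h : b.1 = b'.1, (G b'.1).Adj (h ▸ b.2.1) b'.2.1
    | _, _ => False)

/-- The friendship graph `F_n`: `n` triangles sharing the common center `none`. -/
def friendshipGraph (n : ℕ) : SimpleGraph (Option (Fin n × Fin 2)) :=
  SimpleGraph.fromRel (fun u w =>
    u = none ∨ ∃ p q : Fin n × Fin 2, u = some p ∧ w = some q ∧ p.1 = q.1)

lemma superDom_card_lower {V : Type*} [Fintype V] [DecidableEq V] {G : SimpleGraph V}
    {S : Finset V} (h : IsSuperDominatingSet G S) :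
    Fintype.card V ≤ 2 * S.card := by
  classical
  choose f hfS hf using h.2
  have key : Sᶜ.card ≤ S.card := by
    apply Finset.card_le_card_of_injOn (fun u => if h : u ∉ S then f u h else u)
    · intro u hu
      simp only [Finset.coe_compl, Set.mem_compl_iff, Finset.mem_coe] at hu
      simp [hu, hfS u hu]
    · intro u hu u' hu' heq
      simp only [Finset.coe_compl, Set.mem_compl_iff, Finset.mem_coe] at hu hu'
      simp only [dif_pos hu, dif_pos hu'] at heq
      have h1 : G.Adj (f u hu) u ∧ u ∉ S := (hf u hu u).mpr rfl
      exact (hf u' hu' u).mp (heq ▸ h1)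
  have := Finset.card_add_card_compl S
  omega

lemma friend_adj_some {k : ℕ} (p q : Fin k × Fin 2) :
    (friendshipGraph k).Adj (some p) (some q) ↔ p ≠ q ∧ p.1 = q.1 := by
  simp only [friendshipGraph, SimpleGraph.fromRel_adj, ne_eq, Option.some.injEq]
  constructor
  · rintro ⟨hne, h | h⟩
    · refine ⟨fun h' => hne (by rw [h']), ?_⟩
      rcases h with h | ⟨p', q', hp, hq, h⟩
      · exact absurd h (by simp)
      · cases hp; cases hq; exact h
    · refine ⟨fun h' => hne (by rw [h']), ?_⟩
      rcases h with h | ⟨p', q', hp, hq, h⟩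
      · exact absurd h (by simp)
      · cases hp; cases hq; exact h.symm
  · rintro ⟨hne, h⟩
    exact ⟨hne, Or.inl (Or.inr ⟨p, q, rfl, rfl, h⟩)⟩

lemma friend_adj_none_some {k : ℕ} (p : Fin k × Fin 2) :
    (friendshipGraph k).Adj none (some p) := by
  simp [friendshipGraph, SimpleGraph.fromRel_adj]

lemma friend_sdn (k : ℕ) : superDominationNumber (friendshipGraph k) = k + 1 := by
  classical
  set T : Set ℕ := {n | ∃ S : Finset (Option (Fin k × Fin 2)),
      IsSuperDominatingSet (friendshipGraph k) S ∧ S.card = n} with hT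
  set S : Finset (Option (Fin k × Fin 2)) :=
    insert none (Finset.univ.image fun i : Fin k => some (i, (0 : Fin 2))) with hS
  have hmemS : ∀ u, u ∈ S ↔ u = none ∨ ∃ i : Fin k, u = some (i, 0) := by
    intro u; simp [hS, eq_comm]
  have hcard : S.card = k + 1 := by
    rw [hS, Finset.card_insert_of_notMem (by simp),
      Finset.card_image_of_injective _ (fun a b hab => by simpa using hab)]
    simp
  have hSd : IsSuperDominatingSet (friendshipGraph k) S := by
    constructor
    · intro u hu
      match u with
      | none => exact absurd ((hmemS none).mpr (Or.inl rfl)) hu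
      | some p =>
        refine ⟨none, (hmemS none).mpr (Or.inl rfl), friend_adj_none_some p⟩
    · intro u hu
      match u with
      | none => exact absurd ((hmemS none).mpr (Or.inl rfl)) hu
      | some p =>
        have hp2 : p.2 = 1 := by
          have : p.2 ≠ 0 := fun h => hu ((hmemS _).mpr (Or.inr ⟨p.1, by
            rw [← h]⟩))
          omega
        refine ⟨some (p.1, 0), (hmemS _).mpr (Or.inr ⟨p.1, rfl⟩), ?_⟩
        intro w
        constructor
        · rintro ⟨hadj, hw⟩
          match w with
          | none => exact absurd ((hmemS none).mpr (Or.inl rfl)) hw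
          | some q =>
            rw [friend_adj_some] at hadj
            have hq1 : q.1 = p.1 := hadj.2.symm
            have hq2 : q.2 = 1 := by
              have : q.2 ≠ 0 := fun h => hw ((hmemS _).mpr (Or.inr ⟨q.1, by rw [← h]⟩))
              omega
            have : q = p := by
              ext <;> simp [hq1, hq2, hp2]
            rw [this]
        · rintro rfl
          refine ⟨(friend_adj_some _ _).mpr ⟨?_, rfl⟩, hu⟩
          intro h
          have := congrArg Prod.snd h
          simp [hp2] at this
  have hmem : k + 1 ∈ T := ⟨S, hSd, hcard⟩
  have hcardV : Fintype.card (Option (Fin k × Fin 2)) = 2 * k + 1 := by simp [Nat.mul_comm]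
  refine le_antisymm (Nat.sInf_le hmem) (le_csInf ⟨_, hmem⟩ ?_)
  rintro m ⟨S', hS', rfl⟩
  have := superDom_card_lower hS'
  omega

lemma superDom_image {V W : Type*} [DecidableEq W] {G : SimpleGraph V} {G' : SimpleGraph W}
    (e : G ≃g G') {S : Finset V} (h : IsSuperDominatingSet G S) :
    IsSuperDominatingSet G' (S.image e) := by
  have hmem : ∀ w : W, w ∈ S.image e ↔ e.symm w ∈ S := by
    intro w
    simp only [Finset.mem_image]
    constructor
    · rintro ⟨v, hv, rfl⟩; simpa using hv
    · intro hv; exact ⟨e.symm w, hv, by simp⟩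
  have hadj : ∀ (v : V) (w : W), G'.Adj (e v) w ↔ G.Adj v (e.symm w) := by
    intro v w
    conv_lhs => rw [show w = e (e.symm w) by simp]
    exact e.map_rel_iff
  constructor
  · intro u hu
    obtain ⟨v, hv, hvu⟩ := h.1 (e.symm u) (fun hc => hu ((hmem u).mpr hc))
    exact ⟨e v, (hmem _).mpr (by simpa using hv), (hadj v u).mpr hvu⟩
  · intro u hu
    obtain ⟨v, hv, hvw⟩ := h.2 (e.symm u) (fun hc => hu ((hmem u).mpr hc))
    refine ⟨e v, (hmem _).mpr (by simpa using hv), ?_⟩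
    intro w
    rw [hadj, hmem, hvw (e.symm w)]
    exact ⟨fun hh => by simpa using congrArg e hh, fun hh => by rw [hh]⟩

lemma sdn_eq_of_iso {V W : Type*} [Fintype V] [Fintype W]
    {G : SimpleGraph V} {G' : SimpleGraph W} (e : G ≃g G') :
    superDominationNumber G = superDominationNumber G' := by
  classical
  unfold superDominationNumber
  congr 1
  ext m
  constructor
  · rintro ⟨S, hS, rfl⟩
    exact ⟨S.image e, superDom_image e hS,
      Finset.card_image_of_injective _ e.toEquiv.injective⟩
  · rintro ⟨S, hS, rfl⟩
    exact ⟨S.image e.symm, superDom_image e.symm hS,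
      Finset.card_image_of_injective _ e.symm.toEquiv.injective⟩

lemma friend_adj_none_none {k : ℕ} : ¬ (friendshipGraph k).Adj none none :=
  SimpleGraph.irrefl _

def T (n : ℕ) : Fin n × Fin 2 ≃ Fin (2 * n) :=
  finProdFinEquiv.trans (finCongr (Nat.mul_comm n 2))

def bouquetEquiv (n : ℕ) :
    Option (Σ i : Fin n, {v : Option (Fin 2 × Fin 2) // v ≠ none}) ≃
      Option (Fin (2 * n) × Fin 2) where
  toFun u := match u with
    | none => none
    | some ⟨_, ⟨none, h⟩⟩ => absurd rfl h
    | some ⟨i, ⟨some (a, b), _⟩⟩ => some (T n (i, a), b)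
  invFun u := match u with
    | none => none
    | some (t, b) => some ⟨((T n).symm t).1, ⟨some (((T n).symm t).2, b), by simp⟩⟩
  left_inv u := by
    match u with
    | none => rfl
    | some ⟨i, ⟨none, h⟩⟩ => exact absurd rfl h
    | some ⟨i, ⟨some (a, b), _⟩⟩ => simp
  right_inv u := by
    match u with
    | none => rfl
    | some (t, b) => simp

lemma bouquet_adj_some_some {n : ℕ} (i j : Fin n)
    (v : {v : Option (Fin 2 × Fin 2) // v ≠ none})
    (w : {v : Option (Fin 2 × Fin 2) // v ≠ none}) :
    (bouquet (fun _ : Fin n => friendshipGraph 2) (fun _ => none)).Adj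
      (some ⟨i, v⟩) (some ⟨j, w⟩) ↔
      i = j ∧ (friendshipGraph 2).Adj v.1 w.1 := by
  simp only [bouquet, SimpleGraph.fromRel_adj, ne_eq, Option.some.injEq]
  constructor
  · rintro ⟨hne, h | h⟩
    · obtain ⟨h, hadj⟩ := h
      subst h
      exact ⟨rfl, hadj⟩
    · obtain ⟨h, hadj⟩ := h
      subst h
      exact ⟨rfl, hadj.symm⟩
  · rintro ⟨rfl, hadj⟩
    refine ⟨?_, Or.inl ⟨rfl, hadj⟩⟩
    intro hc
    have : v = w := by
      have := (Sigma.mk.inj_iff.mp hc).2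
      exact eq_of_heq this
    exact hadj.ne (by rw [this])

lemma bouquet_adj_none_some {n : ℕ} (i : Fin n)
    (v : {v : Option (Fin 2 × Fin 2) // v ≠ none}) :
    (bouquet (fun _ : Fin n => friendshipGraph 2) (fun _ => none)).Adj
      none (some ⟨i, v⟩) ↔ (friendshipGraph 2).Adj none v.1 := by
  simp only [bouquet, SimpleGraph.fromRel_adj, ne_eq]
  constructor
  · rintro ⟨hne, h | h⟩
    · exact h
    · exact absurd h id
  · intro h
    exact ⟨by simp, Or.inl h⟩


def bouquetIso (n : ℕ) :
    bouquet (fun _ : Fin n => friendshipGraph 2) (fun _ => none) ≃g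
      friendshipGraph (2 * n) where
  toEquiv := bouquetEquiv n
  map_rel_iff' := by
    rintro (_ | ⟨i, ⟨(_ | ⟨a, b⟩), hv⟩⟩) (_ | ⟨j, ⟨(_ | ⟨c, d⟩), hw⟩⟩)
    · exact iff_of_false (by simp [bouquetEquiv]) (SimpleGraph.irrefl _)
    · exact absurd rfl hw
    · refine iff_of_true ?_ ?_
      · simpa [bouquetEquiv] using friend_adj_none_some (T n (j, c), d)
      · exact (bouquet_adj_none_some j ⟨some (c, d), hw⟩).mpr (friend_adj_none_some (c, d))
    · exact absurd rfl hv
    · exact absurd rfl hv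
    · exact absurd rfl hv
    · refine iff_of_true ?_ ?_
      · simpa [bouquetEquiv] using (friend_adj_none_some (T n (i, a), b)).symm
      · exact ((bouquet_adj_none_some i ⟨some (a, b), hv⟩).mpr
          (friend_adj_none_some (a, b))).symm
    · exact absurd rfl hw
    · rw [bouquet_adj_some_some]
      simp only [bouquetEquiv, Equiv.coe_fn_mk, friend_adj_some, ne_eq, Prod.mk.injEq,
        EmbeddingLike.apply_eq_iff_eq]
      tauto

theorem stmt_17 (n : ℕ) (hn : 1 ≤ n) :
    Nonempty (bouquet (fun _ : Fin n => friendshipGraph 2) (fun _ => none) ≃g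
      friendshipGraph (2 * n)) ∧
    superDominationNumber (friendshipGraph 2) = 3 ∧
    superDominationNumber (friendshipGraph (2 * n)) = 2 * n + 1 ∧
    superDominationNumber
        (bouquet (fun _ : Fin n => friendshipGraph 2) (fun _ => none)) =
      (∑ _i : Fin n, superDominationNumber (friendshipGraph 2)) - n + 1 := by
  refine ⟨⟨bouquetIso n⟩, friend_sdn 2, friend_sdn (2 * n), ?_⟩
  rw [sdn_eq_of_iso (bouquetIso n), friend_sdn (2 * n)]
  simp only [friend_sdn 2, Finset.sum_const, Finset.card_univ, Fintype.card_fin, smul_eq_mul]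
  omega
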